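/- Let p, q, k be positive integers with gcd(p,q)=1, gcd(p,k)=1, 1 ≤ k < p. Define F_X(t) = Σ_{i=1}^{p} t^{c(i)} and F_Y(t) = Σ_{j=1}^{k} t^{c(i_j)-p} (notation as usual). Write F_X(t) = [p]·f_X(t) and F_Y(t) = [k]·f_Y(t) in ℤ[t,t^{-1}], and let d = min_i c(i), e = min_j (c(i_j)−p). Then t^{-d} f_X(t) = t^{-e} f_Y(t); that is, F_X(t)/[p] and F_Y(t)/[k] agree up to multiplication by a power of t. -/

import Mathlib

open LaurentPolynomial

/-- `E(i) = 1` iff the residue of `i*q` modulo `p` lies in `{0,...,k-1}`. -/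
def Efn (p q k i : ℕ) : ℕ := if (i * q) % p < k then 1 else 0

/-- `s(i) = E(1) + ⋯ + E(i)`. -/
def sfn (p q k i : ℕ) : ℕ := ∑ j ∈ Finset.Icc 1 i, Efn p q k j

/-- `c(i) = -i·k + p·s(i)`. -/
def cfn (p q k i : ℕ) : ℤ := -(i * k : ℤ) + p * sfn p q k i

lemma Efn_cases (p q k i : ℕ) : Efn p q k i = 0 ∨ Efn p q k i = 1 := by
  unfold Efn; split <;> simp

lemma cfn_zero (p q k : ℕ) : cfn p q k 0 = 0 := by
  simp [cfn, sfn]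

lemma cfn_succ (p q k i : ℕ) :
    cfn p q k (i + 1) = cfn p q k i - k + p * Efn p q k (i + 1) := by
  unfold cfn sfn
  rw [Finset.sum_Icc_succ_top (by omega)]
  push_cast
  ring

lemma sfn_p (p q k : ℕ) (hp : 0 < p) (hpq : Nat.Coprime p q) (hkp : k ≤ p) :
    sfn p q k p = k := by
  classical
  have hinj : Set.InjOn (fun i => (i * q) % p) (Finset.Icc 1 p) := by
    intro i hi j hj hij
    simp only [Finset.coe_Icc, Set.mem_Icc] at hi hj
    have h1 : i * q ≡ j * q [MOD p] := hij
    have h2 : i ≡ j [MOD p] :=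
      Nat.ModEq.cancel_right_of_coprime (by simpa [Nat.Coprime] using hpq) h1
    rcases le_total i j with hle | hle
    · have hdvd : p ∣ j - i := (Nat.modEq_iff_dvd' hle).mp h2
      rcases Nat.eq_zero_or_pos (j - i) with h0 | h0
      · omega
      · have := Nat.le_of_dvd h0 hdvd; omega
    · have hdvd : p ∣ i - j := (Nat.modEq_iff_dvd' hle).mp h2.symm
      rcases Nat.eq_zero_or_pos (i - j) with h0 | h0
      · omega
      · have := Nat.le_of_dvd h0 hdvd; omega
  have himg : (Finset.Icc 1 p).image (fun i => (i * q) % p) = Finset.range p := by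
    apply Finset.eq_of_subset_of_card_le
    · intro x hx
      simp only [Finset.mem_image, Finset.mem_Icc] at hx
      obtain ⟨i, _, rfl⟩ := hx
      exact Finset.mem_range.mpr (Nat.mod_lt _ hp)
    · rw [Finset.card_image_of_injOn hinj, Nat.card_Icc, Finset.card_range]
      omega
  have h1 : sfn p q k p = ((Finset.Icc 1 p).filter (fun i => (i * q) % p < k)).card := by
    unfold sfn Efn
    rw [Finset.card_filter]
  rw [h1]
  have h2 : ((Finset.Icc 1 p).filter (fun i => (i * q) % p < k)).card
      = (((Finset.Icc 1 p).image (fun i => (i * q) % p)).filter (fun x => x < k)).card := by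
    rw [Finset.filter_image]
    exact (Finset.card_image_of_injOn (hinj.mono (by
      exact_mod_cast Finset.coe_subset.mpr (Finset.filter_subset _ _)))).symm
  rw [h2, himg]
  have h3 : (Finset.range p).filter (fun x => x < k) = Finset.range k := by
    ext x
    simp only [Finset.mem_filter, Finset.mem_range]
    omega
  rw [h3, Finset.card_range]

lemma cfn_p (p q k : ℕ) (hp : 0 < p) (hpq : Nat.Coprime p q) (hkp : k ≤ p) :
    cfn p q k p = 0 := by
  unfold cfn
  rw [sfn_p p q k hp hpq hkp]
  push_cast
  ring

lemma key_identity (p q k : ℕ) (hp : 0 < p) (hpq : Nat.Coprime p q) (hkp : k ≤ p) :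
    (∑ i ∈ Finset.Icc 1 p, (T (cfn p q k i) : LaurentPolynomial ℤ)) * (1 - T k)
    = (∑ i ∈ (Finset.Icc 1 p).filter (fun i => Efn p q k i = 1),
        (T (cfn p q k i - p) : LaurentPolynomial ℤ)) * (T k - T (k + p)) := by
  classical
  set FX := ∑ i ∈ Finset.Icc 1 p, (T (cfn p q k i) : LaurentPolynomial ℤ) with hFX
  set FY := ∑ i ∈ (Finset.Icc 1 p).filter (fun i => Efn p q k i = 1),
      (T (cfn p q k i - p) : LaurentPolynomial ℤ) with hFY
  have hre : ∀ f : ℕ → LaurentPolynomial ℤ,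
      ∑ i ∈ Finset.range p, f (i + 1) = ∑ i ∈ Finset.Icc 1 p, f i := by
    intro f
    have h : Finset.Icc 1 p = (Finset.range p).image (· + 1) := by
      ext x
      simp only [Finset.mem_Icc, Finset.mem_image, Finset.mem_range]
      constructor
      · rintro ⟨h1, h2⟩
        exact ⟨x - 1, by omega, by omega⟩
      · rintro ⟨a, ha, rfl⟩
        omega
    rw [h, Finset.sum_image (by intro a _ b _ hab; exact Nat.add_right_cancel hab)]
  have tele : ∑ i ∈ Finset.range p,
      ((T (cfn p q k (i + 1)) : LaurentPolynomial ℤ) - T (cfn p q k i)) = 0 := by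
    rw [Finset.sum_range_sub (fun i => (T (cfn p q k i) : LaurentPolynomial ℤ))]
    rw [cfn_p p q k hp hpq hkp, cfn_zero]
    ring
  have step : ∀ i ∈ Finset.range p,
      (T (cfn p q k (i + 1)) : LaurentPolynomial ℤ) - T (cfn p q k i)
      = T (cfn p q k (i + 1)) - T (k : ℤ) *
        (if Efn p q k (i + 1) = 1 then (T (cfn p q k (i + 1) - p) : LaurentPolynomial ℤ)
          else T (cfn p q k (i + 1))) := by
    intro i _
    rcases Efn_cases p q k (i + 1) with h | h
    · rw [h]
      have hc := cfn_succ p q k i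
      rw [h] at hc
      rw [if_neg (by omega), ← T_add]
      congr 2
      push_cast at hc ⊢
      omega
    · rw [h]
      have hc := cfn_succ p q k i
      rw [h] at hc
      rw [if_pos rfl, ← T_add]
      congr 2
      push_cast at hc ⊢
      omega
  rw [Finset.sum_congr rfl step, Finset.sum_sub_distrib, ← Finset.mul_sum] at tele
  rw [hre (fun i => (T (cfn p q k i) : LaurentPolynomial ℤ)),
    hre (fun i => if Efn p q k i = 1 then (T (cfn p q k i - p) : LaurentPolynomial ℤ)
      else T (cfn p q k i))] at tele
  rw [Finset.sum_ite] at tele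
  have hsplit : ∑ i ∈ (Finset.Icc 1 p).filter (fun i => ¬ Efn p q k i = 1),
      (T (cfn p q k i) : LaurentPolynomial ℤ)
      = FX - ∑ i ∈ (Finset.Icc 1 p).filter (fun i => Efn p q k i = 1),
          (T (cfn p q k i) : LaurentPolynomial ℤ) := by
    rw [hFX, ← Finset.sum_filter_add_sum_filter_not (Finset.Icc 1 p)
      (fun i => Efn p q k i = 1) (fun i => (T (cfn p q k i) : LaurentPolynomial ℤ))]
    ring
  have hTp : ∑ i ∈ (Finset.Icc 1 p).filter (fun i => Efn p q k i = 1),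
      (T (cfn p q k i) : LaurentPolynomial ℤ) = T (p : ℤ) * FY := by
    rw [hFY, Finset.mul_sum]
    apply Finset.sum_congr rfl
    intro i _
    rw [← T_add]
    congr 1
    ring
  rw [hsplit, hTp] at tele
  have hkp' : (T ((k : ℤ) + p) : LaurentPolynomial ℤ) = T k * T p := T_add _ _
  rw [hkp']
  linear_combination tele

theorem stmt19 (p q k : ℕ) (hp : 0 < p) (hq : 0 < q) (hpq : Nat.Coprime p q)
    (hpk : Nat.Coprime p k) (hk : 1 ≤ k) (hkp : k < p)
    (fX fY : LaurentPolynomial ℤ)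
    (hfX : ∑ i ∈ Finset.Icc 1 p, (T (cfn p q k i) : LaurentPolynomial ℤ)
      = (∑ n ∈ Finset.range p, (T (n : ℤ) : LaurentPolynomial ℤ)) * fX)
    (hfY : ∑ i ∈ (Finset.Icc 1 p).filter (fun i => Efn p q k i = 1),
        (T (cfn p q k i - p) : LaurentPolynomial ℤ)
      = (∑ n ∈ Finset.range k, (T (n : ℤ) : LaurentPolynomial ℤ)) * fY)
    (d e : ℤ)
    (hd : IsLeast {x : ℤ | ∃ i ∈ Finset.Icc 1 p, x = cfn p q k i} d)
    (he : IsLeast {x : ℤ | ∃ i ∈ (Finset.Icc 1 p).filter (fun i => Efn p q k i = 1),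
        x = cfn p q k i - p} e) :
    T (-d) * fX = T (-e) * fY := by
  classical
  have hkple : k ≤ p := le_of_lt hkp
  -- geometric sum identities
  have hPmul : (∑ n ∈ Finset.range p, (T (n : ℤ) : LaurentPolynomial ℤ)) * (T 1 - 1)
      = T (p : ℤ) - 1 := by
    have : ∀ n : ℕ, (T (n : ℤ) : LaurentPolynomial ℤ) = (T 1) ^ n := by
      intro n; rw [T_pow, mul_one]
    simp_rw [this]
    rw [geom_sum_mul]
  have hKmul : (∑ n ∈ Finset.range k, (T (n : ℤ) : LaurentPolynomial ℤ)) * (T 1 - 1)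
      = T (k : ℤ) - 1 := by
    have : ∀ n : ℕ, (T (n : ℤ) : LaurentPolynomial ℤ) = (T 1) ^ n := by
      intro n; rw [T_pow, mul_one]
    simp_rw [this]
    rw [geom_sum_mul]
  have hTne : ∀ n : ℤ, n ≠ 0 → (T n : LaurentPolynomial ℤ) ≠ 1 := by
    intro n hn hh
    rw [← T_zero] at hh
    exact hn (AddMonoidAlgebra.single_left_injective one_ne_zero hh)
  -- key telescoping identity
  have key := key_identity p q k hp hpq hkple
  rw [hfX, hfY] at key
  have h5 : (T ((k : ℤ) + p) : LaurentPolynomial ℤ) = T k * T p := T_add _ _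
  have e2 : fX * ((T (p : ℤ) - 1) * (1 - T (k : ℤ)))
      = T (k : ℤ) * fY * ((T (p : ℤ) - 1) * (1 - T (k : ℤ))) := by
    linear_combination (T 1 - 1) * key - fX * (1 - T (k : ℤ)) * hPmul
      + fY * (T (k : ℤ) - T ((k : ℤ) + p)) * hKmul + fY * (1 - T (k : ℤ)) * h5
  have hne : ((T (p : ℤ) - 1) * (1 - T (k : ℤ)) : LaurentPolynomial ℤ) ≠ 0 := by
    apply mul_ne_zero
    · exact sub_ne_zero.mpr (hTne _ (by exact_mod_cast hp.ne'))
    · intro h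
      have : (T (k : ℤ) : LaurentPolynomial ℤ) = 1 := by linear_combination -h
      exact hTne (k : ℤ) (by exact_mod_cast (by omega : k ≠ 0)) this
  have hfXY : fX = T (k : ℤ) * fY := mul_right_cancel₀ hne e2
  -- now show e = d - k
  have hcp0 : cfn p q k p = 0 := cfn_p p q k hp hpq hkple
  have hdle0 : d ≤ 0 := by
    have := hd.2 ⟨p, Finset.mem_Icc.mpr ⟨hp, le_refl p⟩, hcp0.symm⟩
    omega
  have hlowall : ∀ j, j ≤ p → d ≤ cfn p q k j := by
    intro j hj
    rcases Nat.eq_zero_or_pos j with h0 | h0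
    · rw [h0, cfn_zero]; exact hdle0
    · exact hd.2 ⟨j, Finset.mem_Icc.mpr ⟨h0, hj⟩, rfl⟩
  have hed : e = d - k := by
    apply le_antisymm
    · -- e ≤ d - k
      obtain ⟨i0, hi0, hdi0⟩ := hd.1
      rw [Finset.mem_Icc] at hi0
      by_cases hip : i0 < p
      · have hE1 : Efn p q k (i0 + 1) = 1 := by
          rcases Efn_cases p q k (i0 + 1) with h | h
          · exfalso
            have hc := cfn_succ p q k i0
            rw [h] at hc
            have hmem : cfn p q k (i0 + 1) = d - k := by push_cast at hc; omega
            have := hd.2 ⟨i0 + 1, Finset.mem_Icc.mpr ⟨by omega, by omega⟩, hmem.symm⟩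
            omega
          · exact h
        have hc := cfn_succ p q k i0
        rw [hE1] at hc
        have hmem : i0 + 1 ∈ (Finset.Icc 1 p).filter (fun i => Efn p q k i = 1) :=
          Finset.mem_filter.mpr ⟨Finset.mem_Icc.mpr ⟨by omega, by omega⟩, hE1⟩
        have := he.2 ⟨i0 + 1, hmem, rfl⟩
        push_cast at hc
        omega
      · have hi0p : i0 = p := by omega
        have hd0 : d = 0 := by rw [hdi0, hi0p, hcp0]
        have hc := cfn_succ p q k 0
        rw [cfn_zero] at hc
        have hE1 : Efn p q k 1 = 1 := by
          rcases Efn_cases p q k 1 with h | h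
          · exfalso
            rw [h] at hc
            have h1 : cfn p q k 1 = -(k : ℤ) := by push_cast at hc; omega
            have := hlowall 1 (by omega)
            omega
          · exact h
        rw [hE1] at hc
        have hmem : 1 ∈ (Finset.Icc 1 p).filter (fun i => Efn p q k i = 1) :=
          Finset.mem_filter.mpr ⟨Finset.mem_Icc.mpr ⟨le_refl 1, by omega⟩, hE1⟩
        have := he.2 ⟨1, hmem, rfl⟩
        push_cast at hc
        omega
    · -- d - k ≤ e
      obtain ⟨i1, hi1m, hei1⟩ := he.1
      rw [Finset.mem_filter, Finset.mem_Icc] at hi1m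
      obtain ⟨⟨h1, h2⟩, hE1⟩ := hi1m
      have hc := cfn_succ p q k (i1 - 1)
      rw [Nat.sub_add_cancel h1, hE1] at hc
      have hlow : d ≤ cfn p q k (i1 - 1) := hlowall (i1 - 1) (by omega)
      push_cast at hc
      omega
  -- conclude
  rw [hfXY, hed, ← mul_assoc, ← T_add]
  congr 2
  ring
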